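/- For subnormalised states ρ, σ on a finite-dimensional Hilbert space (i.e., positive semidefinite matrices with trace at most 1), the generalised trace distance Δ(ρ,σ) = (1/2)‖ρ−σ‖₁ + (1/2)|Tr(ρ−σ)| satisfies Δ(ρ,σ) ≤ P(ρ,σ) ≤ √(2Δ(ρ,σ) − Δ(ρ,σ)²) ≤ √(2Δ(ρ,σ)), where P(ρ,σ) = √(1−F(ρ,σ)) is the purified distance and F is the generalised fidelity F(ρ,σ) = (‖√ρ√σ‖₁ + √((1−Tr ρ)(1−Tr σ)))². -/

import Mathlib

set_option maxHeartbeats 1000000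


open Matrix
open scoped ComplexOrder
open scoped InnerProductSpace

variable {n : Type*}

/-- The positive semidefinite square root of a positive semidefinite matrix
(the definition of `Matrix.PosSemidef.sqrt` in the older Mathlib, since removed). -/
noncomputable def Matrix.PosSemidef.sqrt {m : Type*} [Fintype m] [DecidableEq m] {𝕜 : Type*}
    [RCLike 𝕜] {A : Matrix m m 𝕜} (hA : A.PosSemidef) : Matrix m m 𝕜 :=
  hA.1.eigenvectorUnitary.1 * diagonal ((↑) ∘ (√·) ∘ hA.1.eigenvalues) *
    (star hA.1.eigenvectorUnitary : Matrix m m 𝕜)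

namespace Matrix.PosSemidef
variable {m : Type*} [Fintype m] [DecidableEq m] {𝕜 : Type*} [RCLike 𝕜] {A : Matrix m m 𝕜}

lemma posSemidef_sqrt (hA : A.PosSemidef) : PosSemidef hA.sqrt := by
  refine PosSemidef.mul_mul_conjTranspose_same ?_ _
  refine posSemidef_diagonal_iff.mpr fun i ↦ ?_
  rw [Function.comp_apply, RCLike.nonneg_iff]
  constructor
  · simp only [Function.comp_apply, RCLike.ofReal_re]
    exact Real.sqrt_nonneg _
  · simp only [Function.comp_apply, RCLike.ofReal_im]

lemma sq_sqrt (hA : A.PosSemidef) : hA.sqrt ^ 2 = A := by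
  let C : Matrix m m 𝕜 := hA.1.eigenvectorUnitary
  let E := diagonal ((↑) ∘ (√·) ∘ hA.1.eigenvalues : m → 𝕜)
  suffices C * (E * (star C * C) * E) * star C = A by
    rw [Matrix.PosSemidef.sqrt, pow_two]
    simpa only [← mul_assoc] using this
  have : star C * C = 1 := by simp [C]
  rw [this, mul_one]
  have : E * E = diagonal ((↑) ∘ hA.1.eigenvalues) := by
    rw [diagonal_mul_diagonal]
    congr! with v
    simp [← pow_two, ← RCLike.ofReal_pow, Real.sq_sqrt (hA.eigenvalues_nonneg v)]
  rw [this]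
  exact hA.1.spectral_theorem.symm

lemma sqrt_mul_self (hA : A.PosSemidef) : hA.sqrt * hA.sqrt = A := by
  rw [← pow_two, sq_sqrt]

lemma eq_of_sq_eq_sq {B : Matrix m m 𝕜} (hA : PosSemidef A) (hB : PosSemidef B)
    (hAB : A ^ 2 = B ^ 2) : A = B := by
  by_contra h_ne
  let ⟨v, t, ht, hv, hv'⟩ := (hA.1.sub hB.1).exists_eigenvector_of_ne_zero (sub_ne_zero.mpr h_ne)
  have h_sum : 0 = t * (star v ⬝ᵥ A *ᵥ v + star v ⬝ᵥ B *ᵥ v) := calc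
    0 = star v ⬝ᵥ (A ^ 2 - B ^ 2) *ᵥ v := by rw [hAB, sub_self, zero_mulVec, dotProduct_zero]
    _ = star v ⬝ᵥ A *ᵥ (A - B) *ᵥ v + star v ⬝ᵥ (A - B) *ᵥ B *ᵥ v := by
      rw [mulVec_mulVec, mulVec_mulVec, ← dotProduct_add, ← add_mulVec, mul_sub, sub_mul,
        add_sub, sub_add_cancel, pow_two, pow_two]
    _ = t * (star v ⬝ᵥ A *ᵥ v) + (star v) ᵥ* (A - B)ᴴ ⬝ᵥ B *ᵥ v := by
      rw [hv', mulVec_smul, dotProduct_smul, RCLike.real_smul_eq_coe_mul,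
        dotProduct_mulVec _ (A - B), hA.1.sub hB.1]
    _ = t * (star v ⬝ᵥ A *ᵥ v + star v ⬝ᵥ B *ᵥ v) := by
      rw [← star_mulVec, hv', mul_add, ← RCLike.real_smul_eq_coe_mul, ← smul_dotProduct]
      simp only [star_smul, star_trivial, smul_dotProduct, RCLike.real_smul_eq_coe_mul]
  replace h_sum : star v ⬝ᵥ A *ᵥ v + star v ⬝ᵥ B *ᵥ v = 0 := by
    rw [eq_comm, ← mul_zero (t : 𝕜)] at h_sum
    exact mul_left_cancel₀ (RCLike.ofReal_ne_zero.mpr ht) h_sum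
  have h_van : star v ⬝ᵥ A *ᵥ v = 0 ∧ star v ⬝ᵥ B *ᵥ v = 0 := by
    refine ⟨le_antisymm ?_ (hA.dotProduct_mulVec_nonneg v),
      le_antisymm ?_ (hB.dotProduct_mulVec_nonneg v)⟩
    · rw [add_comm, add_eq_zero_iff_eq_neg] at h_sum
      simpa only [h_sum, neg_nonneg] using hB.dotProduct_mulVec_nonneg v
    · simpa only [add_eq_zero_iff_eq_neg.mp h_sum, neg_nonneg] using hA.dotProduct_mulVec_nonneg v
  have aux : star v ⬝ᵥ (A - B) *ᵥ v = 0 := by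
    rw [sub_mulVec, dotProduct_sub, h_van.1, h_van.2, sub_zero]
  rw [hv', dotProduct_smul, RCLike.real_smul_eq_coe_mul, mul_eq_zero, RCLike.ofReal_eq_zero] at aux
  exact hv (dotProduct_star_self_eq_zero.mp (aux.resolve_left ht))

lemma eq_sqrt_of_sq_eq {B : Matrix m m 𝕜} (hA : PosSemidef A) (hB : PosSemidef B)
    (hAB : A ^ 2 = B) : A = hB.sqrt := by
  subst hAB
  exact eq_of_sq_eq_sq hA hB.posSemidef_sqrt (sq_sqrt hB).symm

end Matrix.PosSemidef

/-- Trace norm of a complex matrix: `Tr √(AᴴA)`. -/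
noncomputable def traceNorm [Fintype n] [DecidableEq n] (A : Matrix n n ℂ) : ℝ :=
  ((Matrix.posSemidef_conjTranspose_mul_self A).sqrt.trace).re

/-- Generalised fidelity of two subnormalised states. -/
noncomputable def gFidelity [Fintype n] [DecidableEq n] {ρ σ : Matrix n n ℂ}
    (hρ : ρ.PosSemidef) (hσ : σ.PosSemidef) : ℝ :=
  (traceNorm (hρ.sqrt * hσ.sqrt) +
    Real.sqrt ((1 - ρ.trace.re) * (1 - σ.trace.re))) ^ 2

/-- Purified distance. -/
noncomputable def pDist [Fintype n] [DecidableEq n] {ρ σ : Matrix n n ℂ}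
    (hρ : ρ.PosSemidef) (hσ : σ.PosSemidef) : ℝ :=
  Real.sqrt (1 - gFidelity hρ hσ)

/-- Generalised trace distance. -/
noncomputable def gTraceDist [Fintype n] [DecidableEq n] (ρ σ : Matrix n n ℂ) : ℝ :=
  (1 / 2) * traceNorm (ρ - σ) + (1 / 2) * |ρ.trace.re - σ.trace.re|

namespace FvdG
variable {m : Type*} [Fintype m] [DecidableEq m]

lemma diag_psd {d : m → ℝ} (hd : ∀ i, 0 ≤ d i) :
    (Matrix.diagonal (Complex.ofReal ∘ d)).PosSemidef :=
  Matrix.posSemidef_diagonal_iff.mpr fun i => by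
    simpa using Complex.zero_le_real.mpr (hd i)

/-- SVD package for square complex matrices. -/
lemma exists_svd (A : Matrix m m ℂ) :
    ∃ (U V : Matrix m m ℂ) (d : m → ℝ),
      Uᴴ * U = 1 ∧ U * Uᴴ = 1 ∧ Vᴴ * V = 1 ∧ V * Vᴴ = 1 ∧ (∀ i, 0 ≤ d i) ∧
      A = U * Matrix.diagonal (Complex.ofReal ∘ d) * Vᴴ ∧ traceNorm A = ∑ i, d i := by
  have hH := Matrix.posSemidef_conjTranspose_mul_self A
  set lam := hH.1.eigenvalues with hlam
  set V : Matrix m m ℂ := (hH.1.eigenvectorUnitary : Matrix m m ℂ) with hVdef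
  have hVmem := Unitary.mem_iff.mp hH.1.eigenvectorUnitary.2
  have hV : Vᴴ * V = 1 := by
    rw [← Matrix.star_eq_conjTranspose]; exact hVmem.1
  have hV' : V * Vᴴ = 1 := by
    rw [← Matrix.star_eq_conjTranspose]; exact hVmem.2
  have key : ∀ D E : Matrix m m ℂ, (V * D * Vᴴ) * (V * E * Vᴴ) = V * (D * E) * Vᴴ := by
    intro D E
    have h1 : Vᴴ * (V * E * Vᴴ) = E * Vᴴ := by
      rw [← Matrix.mul_assoc, ← Matrix.mul_assoc, hV, Matrix.one_mul]
    rw [Matrix.mul_assoc (V * D), h1]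
    simp only [Matrix.mul_assoc]
  have hspec : Aᴴ * A = V * Matrix.diagonal (Complex.ofReal ∘ lam) * Vᴴ := hH.1.spectral_theorem
  set d : m → ℝ := fun i => Real.sqrt (lam i) with hd_def
  have hd : ∀ i, 0 ≤ d i := fun i => Real.sqrt_nonneg _
  have hlam_nn : ∀ i, 0 ≤ lam i := hH.eigenvalues_nonneg
  have hC : (V * Matrix.diagonal (Complex.ofReal ∘ d) * Vᴴ).PosSemidef :=
    (diag_psd hd).mul_mul_conjTranspose_same V
  have hdd : Matrix.diagonal (Complex.ofReal ∘ d) * Matrix.diagonal (Complex.ofReal ∘ d)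
      = Matrix.diagonal (Complex.ofReal ∘ lam) := by
    rw [Matrix.diagonal_mul_diagonal]
    ext i j
    rcases eq_or_ne i j with h | h
    · subst h
      simp [Matrix.diagonal_apply_eq, hd_def, ← Complex.ofReal_mul,
        Real.mul_self_sqrt (hlam_nn i)]
    · simp [Matrix.diagonal_apply_ne _ h]
  have hCsq : (V * Matrix.diagonal (Complex.ofReal ∘ d) * Vᴴ) ^ 2 = Aᴴ * A := by
    rw [pow_two, key, hdd, hspec]
  have hsqrt : hH.sqrt = V * Matrix.diagonal (Complex.ofReal ∘ d) * Vᴴ :=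
    (hC.eq_sqrt_of_sq_eq hH hCsq).symm
  have htn : traceNorm A = ∑ i, d i := by
    rw [traceNorm, hsqrt, Matrix.trace_mul_cycle, hV, Matrix.one_mul, Matrix.trace_diagonal]
    simp
  -- eigenvector columns
  set b := hH.1.eigenvectorBasis with hb
  have hVb : ∀ i j, V i j = b j i := fun i j => hH.1.eigenvectorUnitary_apply i j
  have heig : ∀ j, (Aᴴ * A) *ᵥ ⇑(b j) = ((lam j : ℂ)) • ⇑(b j) := by
    intro j
    have h := hH.1.mulVec_eigenvectorBasis j
    rw [h]
    funext i
    simp [Complex.real_smul]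
    rfl
  have hinner : ∀ j k, star (⇑(b j)) ⬝ᵥ (⇑(b k)) = if j = k then 1 else 0 := by
    intro j k
    have := orthonormal_iff_ite.mp b.orthonormal j k
    rwa [EuclideanSpace.inner_eq_star_dotProduct, dotProduct_comm] at this
  have hAA : ∀ j k, star (A *ᵥ ⇑(b j)) ⬝ᵥ (A *ᵥ ⇑(b k))
      = (lam k : ℂ) * (if j = k then 1 else 0) := by
    intro j k
    rw [Matrix.star_mulVec, Matrix.dotProduct_mulVec, Matrix.vecMul_vecMul,
      ← Matrix.dotProduct_mulVec, heig k, dotProduct_smul, hinner j k, smul_eq_mul]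
  -- the left singular family
  set w : m → EuclideanSpace ℂ m :=
    fun j => (WithLp.equiv 2 (m → ℂ)).symm (((d j : ℂ))⁻¹ • (A *ᵥ ⇑(b j))) with hw
  have hwi : ∀ j (i : m), w j i = ((d j : ℂ))⁻¹ * (A *ᵥ ⇑(b j)) i := by
    intro j i; rfl
  have hsq : ∀ j, (d j : ℂ) * (d j : ℂ) = (lam j : ℂ) := by
    intro j
    rw [← Complex.ofReal_mul, Real.mul_self_sqrt (hlam_nn j)]
  have hw_on : Orthonormal ℂ (({j | lam j ≠ 0} : Set m).restrict w) := by
    rw [orthonormal_iff_ite]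
    rintro ⟨j, hj⟩ ⟨k, hk⟩
    have hdj : (d j : ℂ) ≠ 0 :=
      Complex.ofReal_ne_zero.mpr
        (ne_of_gt (Real.sqrt_pos.mpr (lt_of_le_of_ne (hlam_nn j) (Ne.symm hj))))
    have key : (⟪w j, w k⟫_ℂ) = ((d j : ℂ))⁻¹ * ((d k : ℂ))⁻¹ * ((lam k : ℂ) *
        (if j = k then 1 else 0)) := by
      rw [EuclideanSpace.inner_eq_star_dotProduct, dotProduct_comm]
      have : ∀ (x y : m → ℂ) (c c' : ℂ), star (c • x) ⬝ᵥ (c' • y)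
          = (starRingEnd ℂ) c * c' * (star x ⬝ᵥ y) := by
        intro x y c c'
        rw [star_smul, smul_dotProduct, dotProduct_smul, smul_eq_mul, smul_eq_mul,
          RCLike.star_def]
        ring
      calc star ((WithLp.equiv 2 (m → ℂ)) (w j)) ⬝ᵥ (WithLp.equiv 2 (m → ℂ)) (w k)
          = star (((d j : ℂ))⁻¹ • (A *ᵥ ⇑(b j))) ⬝ᵥ (((d k : ℂ))⁻¹ • (A *ᵥ ⇑(b k))) := rfl
        _ = (starRingEnd ℂ) ((d j : ℂ))⁻¹ * ((d k : ℂ))⁻¹ *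
            (star (A *ᵥ ⇑(b j)) ⬝ᵥ (A *ᵥ ⇑(b k))) := this _ _ _ _
        _ = ((d j : ℂ))⁻¹ * ((d k : ℂ))⁻¹ * ((lam k : ℂ) * (if j = k then 1 else 0)) := by
            rw [hAA j k, map_inv₀, Complex.conj_ofReal]
    change ⟪w j, w k⟫_ℂ = _
    rw [key]
    rcases eq_or_ne j k with h | h
    · subst h
      rw [if_pos rfl, if_pos rfl, mul_one, ← hsq j]
      field_simp
    · rw [if_neg h, if_neg (by simpa [Subtype.mk_eq_mk] using h)]
      ring
  -- extend to an orthonormal basis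
  obtain ⟨bb, hbb⟩ :=
    hw_on.exists_orthonormalBasis_extension_of_card_eq (finrank_euclideanSpace (𝕜 := ℂ) (ι := m))
  set U : Matrix m m ℂ := Matrix.of fun i j => bb j i with hU_def
  have hUinner : ∀ j k, star (⇑(bb j)) ⬝ᵥ (⇑(bb k)) = if j = k then 1 else 0 := by
    intro j k
    have := orthonormal_iff_ite.mp bb.orthonormal j k
    rwa [EuclideanSpace.inner_eq_star_dotProduct, dotProduct_comm] at this
  have hU : Uᴴ * U = 1 := by
    ext j k
    rw [Matrix.mul_apply, Matrix.one_apply]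
    simpa [Matrix.conjTranspose_apply, hU_def, dotProduct, Matrix.star_apply]
      using hUinner j k
  have hU' : U * Uᴴ = 1 := mul_eq_one_comm.mp hU
  -- A * V = U * diagonal d
  have hAzero : ∀ j, lam j = 0 → A *ᵥ ⇑(b j) = 0 := by
    intro j hj
    apply dotProduct_star_self_eq_zero.mp
    rw [hAA j j, hj, if_pos rfl]
    simp
  have hAV : A * V = U * Matrix.diagonal (Complex.ofReal ∘ d) := by
    ext i j
    have hL : (A * V) i j = (A *ᵥ ⇑(b j)) i := by
      rw [Matrix.mul_apply, Matrix.mulVec]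
      simp only [dotProduct, hVb]
    have hR : (U * Matrix.diagonal (Complex.ofReal ∘ d)) i j = bb j i * (d j : ℂ) := by
      rw [Matrix.mul_diagonal]
      simp [hU_def, mul_comm]
    rw [hL, hR]
    rcases eq_or_ne (lam j) 0 with h | h
    · rw [hAzero j h]
      have : d j = 0 := by rw [hd_def]; simp [h]
      simp [this]
    · have hdj : (d j : ℂ) ≠ 0 :=
        Complex.ofReal_ne_zero.mpr
          (ne_of_gt (Real.sqrt_pos.mpr (lt_of_le_of_ne (hlam_nn j) (Ne.symm h))))
      rw [hbb j h]
      rw [hwi j i]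
      field_simp
  refine ⟨U, V, d, hU, hU', hV, hV', hd, ?_, htn⟩
  rw [← hAV, Matrix.mul_assoc, hV', Matrix.mul_one]

lemma traceNorm_nonneg (A : Matrix m m ℂ) : 0 ≤ traceNorm A := by
  obtain ⟨U, V, d, -, -, -, -, hd, -, htn⟩ := exists_svd A
  rw [htn]
  exact Finset.sum_nonneg fun i _ => hd i

lemma unitary_entry_abs_le {M : Matrix m m ℂ} (hM : Mᴴ * M = 1) (i j : m) :
    ‖M i j‖ ≤ 1 := by
  have h1 : (Mᴴ * M) j j = 1 := by rw [hM]; simp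
  rw [Matrix.mul_apply] at h1
  have h2 : ∀ k, (Mᴴ j k * M k j : ℂ) = ((‖M k j‖ ^ 2 : ℝ) : ℂ) := by
    intro k
    rw [Matrix.conjTranspose_apply, Complex.star_def, mul_comm, Complex.mul_conj,
      Complex.normSq_eq_norm_sq]
  have h3 : (∑ k, (‖M k j‖ ^ 2 : ℝ)) = 1 := by
    have : (((∑ k, (‖M k j‖ ^ 2 : ℝ)) : ℝ) : ℂ) = 1 := by
      rw [Complex.ofReal_sum, ← h1]
      exact Finset.sum_congr rfl fun k _ => (h2 k).symm
    exact_mod_cast this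
  have h4 : ‖M i j‖ ^ 2 ≤ 1 := by
    rw [← h3]
    exact Finset.single_le_sum (fun (k : m) (_ : k ∈ Finset.univ) =>
      sq_nonneg (‖M k j‖)) (Finset.mem_univ i)
  exact (pow_le_one_iff_of_nonneg (norm_nonneg _) two_ne_zero).mp h4

/-- Duality upper bound: `Re Tr (A W) ≤ ‖A‖₁` for unitary `W`. -/
lemma re_trace_mul_unitary_le (A : Matrix m m ℂ) {W : Matrix m m ℂ}
    (hW : Wᴴ * W = 1) (hW' : W * Wᴴ = 1) : ((A * W).trace).re ≤ traceNorm A := by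
  obtain ⟨U, V, d, hU, hU', hV, hV', hd, hA, htn⟩ := exists_svd A
  set X := Vᴴ * W * U with hX
  have hXu : Xᴴ * X = 1 := by
    rw [hX]
    simp only [Matrix.conjTranspose_mul, Matrix.conjTranspose_conjTranspose]
    calc Uᴴ * (Wᴴ * V) * (Vᴴ * W * U) = Uᴴ * (Wᴴ * ((V * Vᴴ) * (W * U))) := by
          simp only [Matrix.mul_assoc]
      _ = 1 := by rw [hV', Matrix.one_mul, ← Matrix.mul_assoc Wᴴ W U, hW, Matrix.one_mul, hU]
  have htr : (A * W).trace = (Matrix.diagonal (Complex.ofReal ∘ d) * X).trace := by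
    rw [hA, hX]
    have h5 : U * Matrix.diagonal (Complex.ofReal ∘ d) * Vᴴ * W
        = U * (Matrix.diagonal (Complex.ofReal ∘ d) * (Vᴴ * W)) := by
      simp only [Matrix.mul_assoc]
    rw [h5, Matrix.trace_mul_comm]
    congr 1
    simp only [Matrix.mul_assoc]
  rw [htr, htn]
  have : (Matrix.diagonal (Complex.ofReal ∘ d) * X).trace = ∑ i, (d i : ℂ) * X i i := by
    rw [Matrix.trace]
    congr 1
    funext i
    rw [Matrix.diag_apply, Matrix.diagonal_mul]
    rfl
  rw [this]
  rw [Complex.re_sum]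
  refine Finset.sum_le_sum fun i _ => ?_
  have h1 : ((d i : ℂ) * X i i).re ≤ ‖(d i : ℂ) * X i i‖ := Complex.re_le_norm _
  refine h1.trans ?_
  rw [norm_mul, Complex.norm_real, Real.norm_eq_abs, abs_of_nonneg (hd i)]
  calc d i * ‖X i i‖ ≤ d i * 1 :=
        mul_le_mul_of_nonneg_left (unitary_entry_abs_le hXu i i) (hd i)
    _ = d i := mul_one _

/-- Polar: some unitary achieves the trace norm. -/
lemma exists_polar (A : Matrix m m ℂ) :
    ∃ W : Matrix m m ℂ, Wᴴ * W = 1 ∧ W * Wᴴ = 1 ∧ (A * W).trace = (traceNorm A : ℂ) := by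
  obtain ⟨U, V, d, hU, hU', hV, hV', hd, hA, htn⟩ := exists_svd A
  refine ⟨V * Uᴴ, ?_, ?_, ?_⟩
  · simp only [Matrix.conjTranspose_mul, Matrix.conjTranspose_conjTranspose]
    calc U * Vᴴ * (V * Uᴴ) = U * ((Vᴴ * V) * Uᴴ) := by simp only [Matrix.mul_assoc]
      _ = 1 := by rw [hV, Matrix.one_mul, hU']
  · simp only [Matrix.conjTranspose_mul, Matrix.conjTranspose_conjTranspose]
    calc V * Uᴴ * (U * Vᴴ) = V * ((Uᴴ * U) * Vᴴ) := by simp only [Matrix.mul_assoc]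
      _ = 1 := by rw [hU, Matrix.one_mul, hV']
  · have h6 : A * (V * Uᴴ) = U * Matrix.diagonal (Complex.ofReal ∘ d) * Uᴴ := by
      rw [hA]
      calc U * Matrix.diagonal (Complex.ofReal ∘ d) * Vᴴ * (V * Uᴴ)
          = U * Matrix.diagonal (Complex.ofReal ∘ d) * ((Vᴴ * V) * Uᴴ) := by
            simp only [Matrix.mul_assoc]
        _ = _ := by rw [hV, Matrix.one_mul]
    rw [h6, Matrix.trace_mul_cycle, hU, Matrix.one_mul, Matrix.trace_diagonal, htn]
    simp

lemma frob_eq (Y : Matrix m m ℂ) :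
    ((Yᴴ * Y).trace).re = ∑ p : m × m, ‖Y p.1 p.2‖ ^ 2 := by
  have hterm : ∀ z : ℂ, (star z * z).re = ‖z‖ ^ 2 := by
    intro z
    rw [Complex.star_def, mul_comm, Complex.mul_conj]
    simp [Complex.normSq_eq_norm_sq, ← Complex.ofReal_pow]
  have h1 : ((Yᴴ * Y).trace).re = ∑ j, ∑ k, ‖Y k j‖ ^ 2 := by
    rw [Matrix.trace, Complex.re_sum]
    refine Finset.sum_congr rfl fun j _ => ?_
    rw [Matrix.diag_apply, Matrix.mul_apply, Complex.re_sum]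
    refine Finset.sum_congr rfl fun k _ => ?_
    rw [Matrix.conjTranspose_apply]
    exact hterm (Y k j)
  rw [h1, ← Finset.univ_product_univ, Finset.sum_product]
  exact Finset.sum_comm

lemma trace_conjTranspose_mul_self_re_nonneg (X : Matrix m m ℂ) :
    0 ≤ ((Xᴴ * X).trace).re := by
  rw [frob_eq]
  positivity

/-- Matrix Hölder / Cauchy–Schwarz for the trace norm. -/
lemma traceNorm_mul_conjTranspose_le (X Y : Matrix m m ℂ) :
    traceNorm (X * Yᴴ) ≤ Real.sqrt (((Xᴴ * X).trace).re) * Real.sqrt (((Yᴴ * Y).trace).re) := by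
  obtain ⟨W, hW, hW', hpol⟩ := exists_polar (X * Yᴴ)
  have h0 : traceNorm (X * Yᴴ) = (((X * Yᴴ) * W).trace).re := by rw [hpol]; simp
  have h1 : ((X * Yᴴ) * W).trace = (Yᴴ * (W * X)).trace := by
    rw [Matrix.trace_mul_cycle X Yᴴ W, Matrix.trace_mul_cycle W X Yᴴ, Matrix.mul_assoc]
  set Z := W * X with hZ
  have h2 : ((Yᴴ * Z).trace).re ≤ ∑ p : m × m, ‖Y p.1 p.2‖ * ‖Z p.1 p.2‖ := by
    rw [Matrix.trace, Complex.re_sum]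
    have : ∀ j, ((Yᴴ * Z) j j).re ≤ ∑ k, ‖Y k j‖ * ‖Z k j‖ := by
      intro j
      rw [Matrix.mul_apply, Complex.re_sum]
      refine Finset.sum_le_sum fun k _ => ?_
      calc ((Yᴴ) j k * Z k j).re ≤ ‖(Yᴴ) j k * Z k j‖ := Complex.re_le_norm _
        _ = ‖Y k j‖ * ‖Z k j‖ := by
            rw [norm_mul, Matrix.conjTranspose_apply, Complex.star_def, Complex.norm_conj]
    calc ∑ j, ((Yᴴ * Z) j j).re ≤ ∑ j, ∑ k, ‖Y k j‖ * ‖Z k j‖ :=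
          Finset.sum_le_sum fun j _ => this j
      _ = ∑ p : m × m, ‖Y p.2 p.1‖ * ‖Z p.2 p.1‖ := by
          rw [← Finset.sum_product', Finset.univ_product_univ]
      _ = ∑ p : m × m, ‖Y p.1 p.2‖ * ‖Z p.1 p.2‖ := by
          exact Finset.sum_nbij' (fun p => (p.2, p.1)) (fun p => (p.2, p.1))
            (by simp) (by simp) (by simp) (by simp) (by simp)
  have hCS : (∑ p : m × m, ‖Y p.1 p.2‖ * ‖Z p.1 p.2‖)
      ≤ Real.sqrt (((Yᴴ * Y).trace).re) * Real.sqrt (((Zᴴ * Z).trace).re) := by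
    have hcs := Finset.sum_mul_sq_le_sq_mul_sq Finset.univ
      (fun p : m × m => ‖Y p.1 p.2‖) (fun p : m × m => ‖Z p.1 p.2‖)
    have hnn : 0 ≤ ∑ p : m × m, ‖Y p.1 p.2‖ * ‖Z p.1 p.2‖ :=
      Finset.sum_nonneg fun p _ => mul_nonneg (norm_nonneg _) (norm_nonneg _)
    rw [frob_eq, frob_eq]
    calc (∑ p : m × m, ‖Y p.1 p.2‖ * ‖Z p.1 p.2‖)
        = Real.sqrt ((∑ p : m × m, ‖Y p.1 p.2‖ * ‖Z p.1 p.2‖) ^ 2) :=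
          (Real.sqrt_sq hnn).symm
      _ ≤ Real.sqrt ((∑ p : m × m, ‖Y p.1 p.2‖ ^ 2) *
            ∑ p : m × m, ‖Z p.1 p.2‖ ^ 2) := Real.sqrt_le_sqrt hcs
      _ = _ := by
          rw [Real.sqrt_mul (Finset.sum_nonneg fun p _ => sq_nonneg _)]
  have hZZ : Zᴴ * Z = Xᴴ * X := by
    rw [hZ, Matrix.conjTranspose_mul]
    calc Xᴴ * Wᴴ * (W * X) = Xᴴ * ((Wᴴ * W) * X) := by simp only [Matrix.mul_assoc]
      _ = Xᴴ * X := by rw [hW, Matrix.one_mul]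
  rw [h0, h1]
  calc ((Yᴴ * Z).trace).re ≤ _ := h2
    _ ≤ _ := hCS
    _ = _ := by rw [hZZ, mul_comm]

lemma unitary_conj_mul {V : Matrix m m ℂ} (hV : Vᴴ * V = 1) (D E : Matrix m m ℂ) :
    (V * D * Vᴴ) * (V * E * Vᴴ) = V * (D * E) * Vᴴ := by
  have h1 : Vᴴ * (V * E * Vᴴ) = E * Vᴴ := by
    rw [← Matrix.mul_assoc, ← Matrix.mul_assoc, hV, Matrix.one_mul]
  rw [Matrix.mul_assoc (V * D), h1]
  simp only [Matrix.mul_assoc]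

lemma psd_trace_re_nonneg {P : Matrix m m ℂ} (hP : P.PosSemidef) : 0 ≤ P.trace.re := by
  have h : P = (hP.sqrt)ᴴ * hP.sqrt := by
    rw [hP.posSemidef_sqrt.1, hP.sqrt_mul_self]
  rw [h]
  exact trace_conjTranspose_mul_self_re_nonneg _

lemma trace_mul_psd_re_nonneg {P Q : Matrix m m ℂ} (hP : P.PosSemidef) (hQ : Q.PosSemidef) :
    0 ≤ ((P * Q).trace).re := by
  have h : (P * Q).trace = (((hQ.sqrt * hP.sqrt)ᴴ) * (hQ.sqrt * hP.sqrt)).trace := by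
    rw [Matrix.conjTranspose_mul, hP.posSemidef_sqrt.1, hQ.posSemidef_sqrt.1]
    calc (P * Q).trace = ((hP.sqrt * hP.sqrt) * (hQ.sqrt * hQ.sqrt)).trace := by
          rw [hP.sqrt_mul_self, hQ.sqrt_mul_self]
      _ = ((hP.sqrt * (hP.sqrt * hQ.sqrt * hQ.sqrt))).trace := by
          congr 1; simp only [Matrix.mul_assoc]
      _ = ((hP.sqrt * hQ.sqrt * hQ.sqrt) * hP.sqrt).trace := Matrix.trace_mul_comm _ _
      _ = (hP.sqrt * hQ.sqrt * (hQ.sqrt * hP.sqrt)).trace := by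
          simp only [Matrix.mul_assoc]
  rw [h]
  exact trace_conjTranspose_mul_self_re_nonneg _

lemma conj_diag_re_nonneg {M : Matrix m m ℂ} (hM : M.PosSemidef) (V : Matrix m m ℂ) (i : m) :
    0 ≤ ((Vᴴ * M * V) i i).re := by
  have key : (Vᴴ * M * V) i i = dotProduct (star (fun k => V k i))
      (M *ᵥ (fun k => V k i)) := by
    simp only [Matrix.mul_apply, dotProduct, Matrix.mulVec, Matrix.conjTranspose_apply,
      Pi.star_apply, Finset.sum_mul, Finset.mul_sum]
    rw [Finset.sum_comm]
    exact Finset.sum_congr rfl fun j _ => Finset.sum_congr rfl fun k _ => by ring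
  have := hM.dotProduct_mulVec_nonneg (fun k => V k i)
  rw [← key] at this
  exact (Complex.le_def.mp this).1

/-- Powers–Størmer inequality. -/
lemma powers_stormer {ρ σ : Matrix m m ℂ} (hρ : ρ.PosSemidef) (hσ : σ.PosSemidef) :
    ρ.trace.re + σ.trace.re - 2 * (((hρ.sqrt * hσ.sqrt).trace).re) ≤ traceNorm (ρ - σ) := by
  set R := hρ.sqrt with hR_def
  set S := hσ.sqrt with hS_def
  have hRh : Rᴴ = R := hρ.posSemidef_sqrt.1
  have hSh : Sᴴ = S := hσ.posSemidef_sqrt.1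
  have hD : (R - S).IsHermitian := by
    rw [Matrix.IsHermitian, Matrix.conjTranspose_sub, hRh, hSh]
  set lam := hD.eigenvalues with hlam
  set V : Matrix m m ℂ := (hD.eigenvectorUnitary : Matrix m m ℂ) with hVdef
  have hVmem := Unitary.mem_iff.mp hD.eigenvectorUnitary.2
  have hV : Vᴴ * V = 1 := by rw [← Matrix.star_eq_conjTranspose]; exact hVmem.1
  have hV' : V * Vᴴ = 1 := by rw [← Matrix.star_eq_conjTranspose]; exact hVmem.2
  have hspec : R - S = V * Matrix.diagonal (Complex.ofReal ∘ lam) * Vᴴ := hD.spectral_theorem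
  set sgn : m → ℂ := fun i => if 0 ≤ lam i then 1 else -1 with hsgn
  set W : Matrix m m ℂ := V * Matrix.diagonal sgn * Vᴴ with hW_def
  have hsgn_star : ∀ i, star (sgn i) = sgn i := by
    intro i
    rw [hsgn]
    rcases le_or_gt 0 (lam i) with h | h
    · simp [if_pos h]
    · simp [if_neg (not_le.mpr h)]
  have hWH : Wᴴ = W := by
    rw [hW_def, Matrix.conjTranspose_mul, Matrix.conjTranspose_mul,
      Matrix.conjTranspose_conjTranspose, Matrix.diagonal_conjTranspose]
    have : star sgn = sgn := funext hsgn_star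
    rw [this]
    simp only [Matrix.mul_assoc]
  have hsgn_sq : Matrix.diagonal sgn * Matrix.diagonal sgn = 1 := by
    rw [Matrix.diagonal_mul_diagonal]
    have h9 : (fun i => sgn i * sgn i) = fun _ => (1 : ℂ) := by
      funext i
      rw [hsgn]
      rcases le_or_gt 0 (lam i) with h | h
      · simp [if_pos h]
      · simp [if_neg (not_le.mpr h)]
    rw [h9, Matrix.diagonal_one]
  have hWW : Wᴴ * W = 1 := by
    rw [hWH, hW_def, unitary_conj_mul hV, hsgn_sq, Matrix.mul_one, hV']
  have hWW' : W * Wᴴ = 1 := by rw [hWH] at hWW ⊢; exact mul_eq_one_comm.mp hWW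
  -- (R-S) * W = W * (R-S) = |D|
  set absD : Matrix m m ℂ :=
    V * Matrix.diagonal (Complex.ofReal ∘ fun i => |lam i|) * Vᴴ with habsD
  have habs_entry : ∀ i, (Complex.ofReal (lam i)) * sgn i = Complex.ofReal |lam i| := by
    intro i
    simp only [hsgn]
    rcases le_or_gt 0 (lam i) with h | h
    · rw [if_pos h, mul_one, abs_of_nonneg h]
    · rw [if_neg (not_le.mpr h), abs_of_neg h]
      push_cast
      ring
  have hdiag_abs : Matrix.diagonal (Complex.ofReal ∘ lam) * Matrix.diagonal sgn
      = Matrix.diagonal (Complex.ofReal ∘ fun i => |lam i|) := by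
    rw [Matrix.diagonal_mul_diagonal]
    ext i j
    rcases eq_or_ne i j with hij | hij
    · subst hij
      rw [Matrix.diagonal_apply_eq, Matrix.diagonal_apply_eq]
      exact habs_entry i
    · rw [Matrix.diagonal_apply_ne _ hij, Matrix.diagonal_apply_ne _ hij]
  have hdiag_abs' : Matrix.diagonal sgn * Matrix.diagonal (Complex.ofReal ∘ lam)
      = Matrix.diagonal (Complex.ofReal ∘ fun i => |lam i|) := by
    rw [Matrix.diagonal_mul_diagonal]
    ext i j
    rcases eq_or_ne i j with hij | hij
    · subst hij
      rw [Matrix.diagonal_apply_eq, Matrix.diagonal_apply_eq, mul_comm]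
      exact habs_entry i
    · rw [Matrix.diagonal_apply_ne _ hij, Matrix.diagonal_apply_ne _ hij]
  have hDW : (R - S) * W = absD := by
    rw [hspec, hW_def, unitary_conj_mul hV, hdiag_abs, habsD]
  have hWD : W * (R - S) = absD := by
    rw [hspec, hW_def, unitary_conj_mul hV, hdiag_abs', habsD]
  -- trace ((ρ - σ) * W) = trace ((R+S) * absD)
  have hiden : (R - S) * (R + S) + (R + S) * (R - S) = (ρ - σ) + (ρ - σ) := by
    have h1 : R * R = ρ := hρ.sqrt_mul_self
    have h2 : S * S = σ := hσ.sqrt_mul_self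
    rw [← h1, ← h2]
    noncomm_ring
  have htr1 : ((ρ - σ) * W).trace = ((R + S) * absD).trace := by
    have e1 : (((ρ - σ) + (ρ - σ)) * W).trace = (((R - S) * (R + S)) * W).trace
        + (((R + S) * (R - S)) * W).trace := by
      rw [← hiden, Matrix.add_mul, Matrix.trace_add]
    have e2 : (((R - S) * (R + S)) * W).trace = ((R + S) * absD).trace := by
      rw [← hWD, Matrix.trace_mul_cycle, Matrix.trace_mul_cycle]
      simp only [Matrix.mul_assoc]
    have e3 : (((R + S) * (R - S)) * W).trace = ((R + S) * absD).trace := by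
      rw [← hDW]
      simp only [Matrix.mul_assoc]
    have e4 : (((ρ - σ) + (ρ - σ)) * W).trace = ((ρ - σ) * W).trace + ((ρ - σ) * W).trace := by
      rw [Matrix.add_mul, Matrix.trace_add]
    have h10 : ((ρ - σ) * W).trace + ((ρ - σ) * W).trace
        = ((R + S) * absD).trace + ((R + S) * absD).trace := by
      rw [← e4, e1, e2, e3]
    have h11 : (2 : ℂ) * (((ρ - σ) * W).trace) = 2 * (((R + S) * absD).trace) := by
      rw [two_mul, two_mul]; exact h10
    exact mul_left_cancel₀ two_ne_zero h11
  -- Re trace ((R+S) * absD) ≥ ∑ lam i ^ 2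
  have hlow : ∑ i, lam i ^ 2 ≤ (((R + S) * absD).trace).re := by
    have htr2 : ((R + S) * absD).trace
        = (Matrix.diagonal (Complex.ofReal ∘ fun i => |lam i|) * (Vᴴ * (R + S) * V)).trace := by
      rw [habsD]
      calc ((R + S) * (V * Matrix.diagonal (Complex.ofReal ∘ fun i => |lam i|) * Vᴴ)).trace
          = ((V * Matrix.diagonal (Complex.ofReal ∘ fun i => |lam i|) * Vᴴ) * (R + S)).trace :=
            Matrix.trace_mul_comm _ _
        _ = (V * (Matrix.diagonal (Complex.ofReal ∘ fun i => |lam i|) * (Vᴴ * (R + S)))).trace := by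
            congr 1
            simp only [Matrix.mul_assoc]
        _ = ((Matrix.diagonal (Complex.ofReal ∘ fun i => |lam i|) * (Vᴴ * (R + S))) * V).trace :=
            Matrix.trace_mul_comm _ _
        _ = _ := by
            congr 1
            simp only [Matrix.mul_assoc]
    rw [htr2]
    have hdiagtr : (Matrix.diagonal (Complex.ofReal ∘ fun i => |lam i|)
        * (Vᴴ * (R + S) * V)).trace = ∑ i, Complex.ofReal |lam i| * (Vᴴ * (R + S) * V) i i := by
      rw [Matrix.trace]
      congr 1
      funext i
      rw [Matrix.diag_apply, Matrix.diagonal_mul]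
      rfl
    rw [hdiagtr, Complex.re_sum]
    refine Finset.sum_le_sum fun i _ => ?_
    have hre : ((Complex.ofReal |lam i|) * (Vᴴ * (R + S) * V) i i).re
        = |lam i| * ((Vᴴ * (R + S) * V) i i).re := by
      rw [Complex.re_ofReal_mul]
    rw [hre]
    -- (Vᴴ (R+S) V)_ii ≥ |lam i|
    have hplus : 0 ≤ ((Vᴴ * ((R + S) - (R - S)) * V) i i).re := by
      have : (R + S) - (R - S) = S + S := by abel
      rw [this]
      exact conj_diag_re_nonneg (hσ.posSemidef_sqrt.add hσ.posSemidef_sqrt) V i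
    have hminus : 0 ≤ ((Vᴴ * ((R + S) + (R - S)) * V) i i).re := by
      have : (R + S) + (R - S) = R + R := by abel
      rw [this]
      exact conj_diag_re_nonneg (hρ.posSemidef_sqrt.add hρ.posSemidef_sqrt) V i
    have hVDV : Vᴴ * (R - S) * V = Matrix.diagonal (Complex.ofReal ∘ lam) := by
      rw [hspec]
      calc Vᴴ * (V * Matrix.diagonal (Complex.ofReal ∘ lam) * Vᴴ) * V
          = (Vᴴ * V) * Matrix.diagonal (Complex.ofReal ∘ lam) * (Vᴴ * V) := by
            simp only [Matrix.mul_assoc]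
        _ = _ := by rw [hV, Matrix.one_mul, Matrix.mul_one]
    have hsplit1 : ((Vᴴ * ((R + S) - (R - S)) * V) i i).re
        = ((Vᴴ * (R + S) * V) i i).re - lam i := by
      have : Vᴴ * ((R + S) - (R - S)) * V = Vᴴ * (R + S) * V - Vᴴ * (R - S) * V := by
        rw [Matrix.mul_sub, Matrix.sub_mul]
      rw [this, hVDV]
      rw [Matrix.sub_apply, Complex.sub_re]
      congr 1
      simp [Matrix.diagonal_apply_eq]
    have hsplit2 : ((Vᴴ * ((R + S) + (R - S)) * V) i i).re
        = ((Vᴴ * (R + S) * V) i i).re + lam i := by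
      have : Vᴴ * ((R + S) + (R - S)) * V = Vᴴ * (R + S) * V + Vᴴ * (R - S) * V := by
        rw [Matrix.mul_add, Matrix.add_mul]
      rw [this, hVDV]
      rw [Matrix.add_apply, Complex.add_re]
      congr 1
      simp [Matrix.diagonal_apply_eq]
    have habs_le : |lam i| ≤ ((Vᴴ * (R + S) * V) i i).re := by
      rw [hsplit1] at hplus
      rw [hsplit2] at hminus
      rcases abs_cases (lam i) with ⟨h, _⟩ | ⟨h, _⟩ <;> rw [h] <;> linarith
    calc lam i ^ 2 = |lam i| * |lam i| := by rw [← sq_abs]; ring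
      _ ≤ |lam i| * ((Vᴴ * (R + S) * V) i i).re :=
          mul_le_mul_of_nonneg_left habs_le (abs_nonneg _)
  -- trace (R-S)^2 = ∑ lam i ^2
  have hDsq : (((R - S) * (R - S)).trace).re = ∑ i, lam i ^ 2 := by
    have : (R - S) * (R - S) = V * (Matrix.diagonal (Complex.ofReal ∘ lam)
        * Matrix.diagonal (Complex.ofReal ∘ lam)) * Vᴴ := by
      rw [hspec, unitary_conj_mul hV]
    rw [this, Matrix.trace_mul_cycle, ← Matrix.mul_assoc, hV, Matrix.one_mul,
      Matrix.diagonal_mul_diagonal, Matrix.trace_diagonal, Complex.re_sum]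
    refine Finset.sum_congr rfl fun i _ => ?_
    simp only [Pi.mul_apply, Function.comp_apply, ← Complex.ofReal_mul, Complex.ofReal_re]
    ring
  -- expand trace (R-S)^2
  have hexpand : (((R - S) * (R - S)).trace).re
      = ρ.trace.re + σ.trace.re - 2 * (((R * S).trace).re) := by
    have : (R - S) * (R - S) = R * R + S * S - (R * S + S * R) := by noncomm_ring
    rw [this, hρ.sqrt_mul_self, hσ.sqrt_mul_self] at *
    rw [Matrix.trace_sub, Matrix.trace_add, Matrix.trace_add, Matrix.trace_mul_comm S R]
    simp only [Complex.sub_re, Complex.add_re]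
    ring
  have hfinal : ((ρ - σ) * W).trace.re ≤ traceNorm (ρ - σ) :=
    re_trace_mul_unitary_le _ hWW hWW'
  rw [← hexpand, hDsq]
  calc ∑ i, lam i ^ 2 ≤ (((R + S) * absD).trace).re := hlow
    _ = ((ρ - σ) * W).trace.re := by rw [htr1]
    _ ≤ traceNorm (ρ - σ) := hfinal

lemma re_trace_le_traceNorm (X : Matrix m m ℂ) : X.trace.re ≤ traceNorm X := by
  have h := re_trace_mul_unitary_le X (W := 1) (by simp) (by simp)
  simpa using h

section blocks
variable {p : Type*} [Fintype p] [DecidableEq p]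

lemma trace_fromBlocks (P : Matrix m m ℂ) (B : Matrix m p ℂ) (C : Matrix p m ℂ)
    (Q : Matrix p p ℂ) : (Matrix.fromBlocks P B C Q).trace = P.trace + Q.trace := by
  simp [Matrix.trace, Fintype.sum_sum_type, Matrix.fromBlocks]

lemma fromBlocks_psd {A : Matrix m m ℂ} {D : Matrix p p ℂ}
    (hA : A.PosSemidef) (hD : D.PosSemidef) :
    (Matrix.fromBlocks A 0 0 D).PosSemidef := by
  have h : Matrix.fromBlocks A 0 0 D =
      (Matrix.fromBlocks hA.sqrt 0 0 hD.sqrt)ᴴ * (Matrix.fromBlocks hA.sqrt 0 0 hD.sqrt) := by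
    rw [Matrix.fromBlocks_conjTranspose, Matrix.fromBlocks_multiply,
      hA.posSemidef_sqrt.1, hD.posSemidef_sqrt.1, hA.sqrt_mul_self, hD.sqrt_mul_self]
    simp
  rw [h]
  exact Matrix.posSemidef_conjTranspose_mul_self _

lemma sqrt_fromBlocks {A : Matrix m m ℂ} {D : Matrix p p ℂ}
    (hA : A.PosSemidef) (hD : D.PosSemidef) (h : (Matrix.fromBlocks A 0 0 D).PosSemidef) :
    h.sqrt = Matrix.fromBlocks hA.sqrt 0 0 hD.sqrt := by
  refine ((fromBlocks_psd hA.posSemidef_sqrt hD.posSemidef_sqrt).eq_sqrt_of_sq_eq h ?_).symm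
  rw [pow_two, Matrix.fromBlocks_multiply]
  simp [hA.sqrt_mul_self, hD.sqrt_mul_self]

lemma traceNorm_fromBlocks (A : Matrix m m ℂ) (D : Matrix p p ℂ) :
    traceNorm (Matrix.fromBlocks A 0 0 D) = traceNorm A + traceNorm D := by
  have h1 : (Matrix.fromBlocks A 0 0 D)ᴴ * (Matrix.fromBlocks A 0 0 D)
      = Matrix.fromBlocks (Aᴴ * A) 0 0 (Dᴴ * D) := by
    rw [Matrix.fromBlocks_conjTranspose, Matrix.fromBlocks_multiply]
    simp
  have hA := Matrix.posSemidef_conjTranspose_mul_self A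
  have hD := Matrix.posSemidef_conjTranspose_mul_self D
  have hbig := Matrix.posSemidef_conjTranspose_mul_self (Matrix.fromBlocks A 0 0 D)
  have hsq : hbig.sqrt = Matrix.fromBlocks hA.sqrt 0 0 hD.sqrt := by
    refine ((fromBlocks_psd hA.posSemidef_sqrt hD.posSemidef_sqrt).eq_sqrt_of_sq_eq hbig ?_).symm
    rw [pow_two, Matrix.fromBlocks_multiply, h1]
    simp [hA.sqrt_mul_self, hD.sqrt_mul_self]
  rw [traceNorm, hsq, trace_fromBlocks]
  simp [traceNorm]

lemma traceNorm_unit (c : ℝ) :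
    traceNorm (Matrix.diagonal (fun _ => (c : ℂ)) : Matrix Unit Unit ℂ) = |c| := by
  set X : Matrix Unit Unit ℂ := Matrix.diagonal (fun _ => (c : ℂ)) with hX
  have h1 : Xᴴ * X = Matrix.diagonal (fun _ => ((c * c : ℝ) : ℂ)) := by
    rw [hX, Matrix.diagonal_conjTranspose, Matrix.diagonal_mul_diagonal]
    congr 1
    funext i
    simp [Complex.star_def, Complex.conj_ofReal, ← Complex.ofReal_mul]
  have hpsd := Matrix.posSemidef_conjTranspose_mul_self X
  have hcand : (Matrix.diagonal (fun _ => ((|c| : ℝ) : ℂ)) : Matrix Unit Unit ℂ).PosSemidef := by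
    have := diag_psd (m := Unit) (d := fun _ => |c|) (fun _ => abs_nonneg c)
    exact this
  have hsq : hpsd.sqrt = Matrix.diagonal (fun _ => ((|c| : ℝ) : ℂ)) := by
    refine (hcand.eq_sqrt_of_sq_eq hpsd ?_).symm
    rw [pow_two, Matrix.diagonal_mul_diagonal, h1]
    congr 1
    funext i
    simp [← Complex.ofReal_mul, abs_mul_abs_self]
  rw [traceNorm, hsq, Matrix.trace_diagonal]
  simp

end blocks

/-- Hard direction core inequality, for normalised states. -/
lemma hard_ineq {ρ σ : Matrix m m ℂ} (hρ : ρ.PosSemidef) (hσ : σ.PosSemidef)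
    (hρ1 : ρ.trace.re = 1) (hσ1 : σ.trace.re = 1) :
    traceNorm (ρ - σ) ≤ 2 * Real.sqrt (1 - traceNorm (hρ.sqrt * hσ.sqrt) ^ 2)
      ∧ traceNorm (hρ.sqrt * hσ.sqrt) ≤ 1 := by
  set t := traceNorm (hρ.sqrt * hσ.sqrt) with ht_def
  obtain ⟨W, hW, hW', hpol⟩ := exists_polar (hρ.sqrt * hσ.sqrt)
  set A := hρ.sqrt with hA_def
  set B := hσ.sqrt * W with hB_def
  have hAh : Aᴴ = A := hρ.posSemidef_sqrt.1
  have hSh : (hσ.sqrt)ᴴ = hσ.sqrt := hσ.posSemidef_sqrt.1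
  have hAAH : A * Aᴴ = ρ := by rw [hAh, hρ.sqrt_mul_self]
  have hBBH : B * Bᴴ = σ := by
    rw [hB_def, Matrix.conjTranspose_mul, hSh]
    calc hσ.sqrt * W * (Wᴴ * hσ.sqrt)
        = hσ.sqrt * ((W * Wᴴ) * hσ.sqrt) := by simp only [Matrix.mul_assoc]
      _ = σ := by rw [hW', Matrix.one_mul, hσ.sqrt_mul_self]
  have htrAB : (Aᴴ * B).trace = (t : ℂ) := by
    rw [hAh, hB_def, ← Matrix.mul_assoc, hpol]
  have htrBA : (Bᴴ * A).trace = (t : ℂ) := by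
    have h7 : (Aᴴ * B)ᴴ = Bᴴ * A := by
      rw [Matrix.conjTranspose_mul, Matrix.conjTranspose_conjTranspose]
    rw [← h7, Matrix.trace_conjTranspose, htrAB]
    simp [Complex.star_def, Complex.conj_ofReal]
  have htrA : (Aᴴ * A).trace.re = 1 := by rw [hAh, hρ.sqrt_mul_self]; exact hρ1
  have htrB : (Bᴴ * B).trace.re = 1 := by
    have : Bᴴ * B = Wᴴ * (σ * W) := by
      rw [hB_def, Matrix.conjTranspose_mul, hSh]
      calc Wᴴ * hσ.sqrt * (hσ.sqrt * W)
          = Wᴴ * ((hσ.sqrt * hσ.sqrt) * W) := by simp only [Matrix.mul_assoc]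
        _ = Wᴴ * (σ * W) := by rw [hσ.sqrt_mul_self]
    rw [this, Matrix.trace_mul_comm, Matrix.mul_assoc, hW', Matrix.mul_one]
    exact hσ1
  set X := A - B with hX_def
  set Y := A + B with hY_def
  have hXX : (Xᴴ * X).trace.re = 2 - 2 * t := by
    have hexp : Xᴴ * X = (Aᴴ * A + Bᴴ * B) - (Aᴴ * B + Bᴴ * A) := by
      rw [hX_def, Matrix.conjTranspose_sub]
      noncomm_ring
    rw [hexp, Matrix.trace_sub, Matrix.trace_add, Matrix.trace_add, htrAB, htrBA]
    rw [Complex.sub_re, Complex.add_re, Complex.add_re, htrA, htrB]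
    simp
    ring
  have hYY : (Yᴴ * Y).trace.re = 2 + 2 * t := by
    have hexp : Yᴴ * Y = (Aᴴ * A + Bᴴ * B) + (Aᴴ * B + Bᴴ * A) := by
      rw [hY_def, Matrix.conjTranspose_add]
      noncomm_ring
    rw [hexp, Matrix.trace_add, Matrix.trace_add, Matrix.trace_add, htrAB, htrBA]
    rw [Complex.add_re, Complex.add_re, Complex.add_re, htrA, htrB]
    simp
    ring
  have ht_le : t ≤ 1 := by
    have h0 := trace_conjTranspose_mul_self_re_nonneg X
    rw [hXX] at h0
    linarith
  have ht_nn : 0 ≤ t := traceNorm_nonneg _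
  refine ⟨?_, ht_le⟩
  -- decomposition
  have hdecomp : (ρ - σ) + (ρ - σ) = X * Yᴴ + Y * Xᴴ := by
    rw [hX_def, hY_def, Matrix.conjTranspose_add, Matrix.conjTranspose_sub, ← hAAH, ← hBBH]
    noncomm_ring
  obtain ⟨W₂, hW₂, hW₂', hpol₂⟩ := exists_polar (ρ - σ)
  have h2tn : 2 * traceNorm (ρ - σ) = ((X * Yᴴ * W₂).trace).re + ((Y * Xᴴ * W₂).trace).re := by
    have e1 : (((ρ - σ) + (ρ - σ)) * W₂).trace = (X * Yᴴ * W₂).trace + (Y * Xᴴ * W₂).trace := by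
      rw [hdecomp, Matrix.add_mul, Matrix.trace_add]
    have e2 : (((ρ - σ) + (ρ - σ)) * W₂).trace = 2 * (traceNorm (ρ - σ) : ℂ) := by
      rw [Matrix.add_mul, Matrix.trace_add, hpol₂, two_mul]
    have := e2.symm.trans e1
    have hre := congrArg Complex.re this
    rw [Complex.add_re] at hre
    rw [← hre]
    simp
  have hb1 : ((X * Yᴴ * W₂).trace).re ≤ Real.sqrt (2 - 2 * t) * Real.sqrt (2 + 2 * t) := by
    calc ((X * Yᴴ * W₂).trace).re ≤ traceNorm (X * Yᴴ) := re_trace_mul_unitary_le _ hW₂ hW₂'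
      _ ≤ Real.sqrt ((Xᴴ * X).trace.re) * Real.sqrt ((Yᴴ * Y).trace.re) :=
          traceNorm_mul_conjTranspose_le X Y
      _ = _ := by rw [hXX, hYY]
  have hb2 : ((Y * Xᴴ * W₂).trace).re ≤ Real.sqrt (2 - 2 * t) * Real.sqrt (2 + 2 * t) := by
    calc ((Y * Xᴴ * W₂).trace).re ≤ traceNorm (Y * Xᴴ) := re_trace_mul_unitary_le _ hW₂ hW₂'
      _ ≤ Real.sqrt ((Yᴴ * Y).trace.re) * Real.sqrt ((Xᴴ * X).trace.re) :=
          traceNorm_mul_conjTranspose_le Y X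
      _ = _ := by rw [hXX, hYY]; ring
  have hsqrt_prod : Real.sqrt (2 - 2 * t) * Real.sqrt (2 + 2 * t)
      = 2 * Real.sqrt (1 - t ^ 2) := by
    rw [← Real.sqrt_mul (by linarith)]
    have : (2 - 2 * t) * (2 + 2 * t) = 4 * (1 - t ^ 2) := by ring
    have h4 : Real.sqrt 4 = 2 := by
      rw [show (4 : ℝ) = 2 ^ 2 by norm_num, Real.sqrt_sq (by norm_num : (0:ℝ) ≤ 2)]
    rw [this, Real.sqrt_mul (by norm_num : (0:ℝ) ≤ 4), h4]
  have := h2tn.le.trans (add_le_add hb1 hb2)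
  rw [hsqrt_prod] at this
  linarith

lemma sqrt_diag_psd {d : m → ℝ} (hd : ∀ i, 0 ≤ d i) :
    (diag_psd hd).sqrt = Matrix.diagonal (Complex.ofReal ∘ fun i => Real.sqrt (d i)) := by
  refine ((diag_psd (fun i => Real.sqrt_nonneg (d i))).eq_sqrt_of_sq_eq (diag_psd hd) ?_).symm
  rw [pow_two, Matrix.diagonal_mul_diagonal]
  ext i j
  rcases eq_or_ne i j with h | h
  · subst h
    rw [Matrix.diagonal_apply_eq, Matrix.diagonal_apply_eq]
    simp [← Complex.ofReal_mul, Real.mul_self_sqrt (hd i)]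
  · rw [Matrix.diagonal_apply_ne _ h, Matrix.diagonal_apply_ne _ h]

end FvdG

section FvdGFinal
open FvdG

lemma fromBlocks_sub' {m p : Type*} (A A' : Matrix m m ℂ) (D D' : Matrix p p ℂ) :
    Matrix.fromBlocks A 0 0 D - Matrix.fromBlocks A' 0 0 D'
      = Matrix.fromBlocks (A - A') 0 0 (D - D') := by
  ext i j
  cases i <;> cases j <;> simp [Matrix.fromBlocks]

lemma diag_ofReal_mul {m : Type*} [Fintype m] [DecidableEq m] (f g : m → ℝ) :
    Matrix.diagonal (Complex.ofReal ∘ f) * Matrix.diagonal (Complex.ofReal ∘ g)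
      = Matrix.diagonal (Complex.ofReal ∘ fun i => f i * g i) := by
  rw [Matrix.diagonal_mul_diagonal]
  ext i j
  rcases eq_or_ne i j with h | h
  · subst h
    rw [Matrix.diagonal_apply_eq, Matrix.diagonal_apply_eq]
    simp
  · rw [Matrix.diagonal_apply_ne _ h, Matrix.diagonal_apply_ne _ h]


/-- Fuchs–van de Graaf inequalities for subnormalised states. -/
theorem fuchs_van_de_graaf [Fintype n] [DecidableEq n] (ρ σ : Matrix n n ℂ)
    (hρ : ρ.PosSemidef) (hσ : σ.PosSemidef)
    (hρ1 : ρ.trace.re ≤ 1) (hσ1 : σ.trace.re ≤ 1) :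
    gTraceDist ρ σ ≤ pDist hρ hσ ∧
    pDist hρ hσ ≤ Real.sqrt (2 * gTraceDist ρ σ - gTraceDist ρ σ ^ 2) ∧
    Real.sqrt (2 * gTraceDist ρ σ - gTraceDist ρ σ ^ 2) ≤ Real.sqrt (2 * gTraceDist ρ σ) := by
  classical
  have hρd : ∀ _ : Unit, (0 : ℝ) ≤ 1 - ρ.trace.re := fun _ => by linarith
  have hσd : ∀ _ : Unit, (0 : ℝ) ≤ 1 - σ.trace.re := fun _ => by linarith
  have hρhpsd : (Matrix.fromBlocks ρ 0 0
      (Matrix.diagonal (Complex.ofReal ∘ fun _ : Unit => 1 - ρ.trace.re))).PosSemidef :=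
    fromBlocks_psd hρ (diag_psd hρd)
  have hσhpsd : (Matrix.fromBlocks σ 0 0
      (Matrix.diagonal (Complex.ofReal ∘ fun _ : Unit => 1 - σ.trace.re))).PosSemidef :=
    fromBlocks_psd hσ (diag_psd hσd)
  -- traces are one
  have htrρh : (Matrix.fromBlocks ρ 0 0
      (Matrix.diagonal (Complex.ofReal ∘ fun _ : Unit => 1 - ρ.trace.re))).trace.re = 1 := by
    rw [trace_fromBlocks, Matrix.trace_diagonal]
    simp
  have htrσh : (Matrix.fromBlocks σ 0 0
      (Matrix.diagonal (Complex.ofReal ∘ fun _ : Unit => 1 - σ.trace.re))).trace.re = 1 := by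
    rw [trace_fromBlocks, Matrix.trace_diagonal]
    simp
  -- sqrt formulas
  have hsρ : hρhpsd.sqrt = Matrix.fromBlocks hρ.sqrt 0 0
      (Matrix.diagonal (Complex.ofReal ∘ fun _ : Unit => Real.sqrt (1 - ρ.trace.re))) := by
    rw [sqrt_fromBlocks hρ (diag_psd hρd) hρhpsd, sqrt_diag_psd hρd]
  have hsσ : hσhpsd.sqrt = Matrix.fromBlocks hσ.sqrt 0 0
      (Matrix.diagonal (Complex.ofReal ∘ fun _ : Unit => Real.sqrt (1 - σ.trace.re))) := by
    rw [sqrt_fromBlocks hσ (diag_psd hσd) hσhpsd, sqrt_diag_psd hσd]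
  have hmul : hρhpsd.sqrt * hσhpsd.sqrt = Matrix.fromBlocks (hρ.sqrt * hσ.sqrt) 0 0
      (Matrix.diagonal (Complex.ofReal ∘ fun _ : Unit =>
        Real.sqrt (1 - ρ.trace.re) * Real.sqrt (1 - σ.trace.re))) := by
    rw [hsρ, hsσ, Matrix.fromBlocks_multiply, diag_ofReal_mul]
    simp
  -- trace norm of the product
  have hT : traceNorm (hρhpsd.sqrt * hσhpsd.sqrt)
      = traceNorm (hρ.sqrt * hσ.sqrt)
        + Real.sqrt ((1 - ρ.trace.re) * (1 - σ.trace.re)) := by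
    rw [hmul, traceNorm_fromBlocks]
    congr 1
    have h := traceNorm_unit (Real.sqrt (1 - ρ.trace.re) * Real.sqrt (1 - σ.trace.re))
    rw [show (Matrix.diagonal (Complex.ofReal ∘ fun _ : Unit =>
        Real.sqrt (1 - ρ.trace.re) * Real.sqrt (1 - σ.trace.re)))
      = (Matrix.diagonal (fun _ : Unit =>
        ((Real.sqrt (1 - ρ.trace.re) * Real.sqrt (1 - σ.trace.re) : ℝ) : ℂ))) from rfl, h,
      abs_of_nonneg (mul_nonneg (Real.sqrt_nonneg _) (Real.sqrt_nonneg _)),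
      ← Real.sqrt_mul (hρd ())]
  -- difference of hats
  have hdiff : (Matrix.fromBlocks ρ 0 0
        (Matrix.diagonal (Complex.ofReal ∘ fun _ : Unit => 1 - ρ.trace.re)))
      - (Matrix.fromBlocks σ 0 0
        (Matrix.diagonal (Complex.ofReal ∘ fun _ : Unit => 1 - σ.trace.re)))
      = Matrix.fromBlocks (ρ - σ) 0 0
        (Matrix.diagonal (Complex.ofReal ∘ fun _ : Unit =>
          (1 - ρ.trace.re) - (1 - σ.trace.re))) := by
    have hd2 : (Matrix.diagonal (Complex.ofReal ∘ fun _ : Unit => 1 - ρ.trace.re)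
        - Matrix.diagonal (Complex.ofReal ∘ fun _ : Unit => 1 - σ.trace.re))
        = Matrix.diagonal (Complex.ofReal ∘ fun _ : Unit =>
            (1 - ρ.trace.re) - (1 - σ.trace.re)) := by
      ext i j
      rcases i
      rcases j
      rw [Matrix.sub_apply, Matrix.diagonal_apply_eq, Matrix.diagonal_apply_eq,
        Matrix.diagonal_apply_eq]
      simp
    rw [fromBlocks_sub', hd2]
  have htnd : traceNorm ((Matrix.fromBlocks ρ 0 0
        (Matrix.diagonal (Complex.ofReal ∘ fun _ : Unit => 1 - ρ.trace.re)))
      - (Matrix.fromBlocks σ 0 0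
        (Matrix.diagonal (Complex.ofReal ∘ fun _ : Unit => 1 - σ.trace.re))))
      = 2 * gTraceDist ρ σ := by
    rw [hdiff, traceNorm_fromBlocks]
    have h := traceNorm_unit ((1 - ρ.trace.re) - (1 - σ.trace.re))
    rw [show (Matrix.diagonal (Complex.ofReal ∘ fun _ : Unit =>
        (1 - ρ.trace.re) - (1 - σ.trace.re)))
      = (Matrix.diagonal (fun _ : Unit =>
        (((1 - ρ.trace.re) - (1 - σ.trace.re) : ℝ) : ℂ))) from rfl, h, gTraceDist]
    rw [show (1 - ρ.trace.re) - (1 - σ.trace.re) = -(ρ.trace.re - σ.trace.re) by ring, abs_neg]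
    ring
  -- hard direction
  obtain ⟨hhard, hTle1⟩ := hard_ineq hρhpsd hσhpsd htrρh htrσh
  rw [htnd, hT] at hhard
  -- Powers-Stormer
  have hPS := powers_stormer hρhpsd hσhpsd
  rw [htrρh, htrσh, htnd] at hPS
  have hre_le : ((hρhpsd.sqrt * hσhpsd.sqrt).trace).re
      ≤ traceNorm (hρhpsd.sqrt * hσhpsd.sqrt) := re_trace_le_traceNorm _
  rw [hT] at hre_le
  rw [hT] at hTle1
  -- abbreviations
  set T := traceNorm (hρ.sqrt * hσ.sqrt)
    + Real.sqrt ((1 - ρ.trace.re) * (1 - σ.trace.re)) with hThat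
  set Δ := gTraceDist ρ σ with hΔ
  have hFid : gFidelity hρ hσ = T ^ 2 := by rw [gFidelity, hThat]
  have hPD : pDist hρ hσ = Real.sqrt (1 - T ^ 2) := by rw [pDist, hFid]
  have hΔle : Δ ≤ Real.sqrt (1 - T ^ 2) := by linarith
  have hsq1 : Real.sqrt (1 - T ^ 2) ≤ 1 := by
    calc Real.sqrt (1 - T ^ 2) ≤ Real.sqrt 1 := Real.sqrt_le_sqrt (by nlinarith [sq_nonneg T])
      _ = 1 := Real.sqrt_one
  have hΔ1 : Δ ≤ 1 := hΔle.trans hsq1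
  have h1mΔ : 1 - Δ ≤ T := by linarith
  refine ⟨by rw [hPD]; exact hΔle, ?_, ?_⟩
  · rw [hPD]
    apply Real.sqrt_le_sqrt
    nlinarith [sq_nonneg (1 - Δ), sq_nonneg T]
  · apply Real.sqrt_le_sqrt
    nlinarith [sq_nonneg Δ]


end FvdGFinal
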